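/- Let (H, ρ) be a Gessel pair, and let H₋, H₀, H₊ be the sets of minus-, zero-, and plus-paths respectively. Then H₋, H₀, and H₊ are each free submonoids of H, and the map H → H₋ × H₀ × H₊ sending π to (π₋, π₀, π₊) given by the unique factorization is a bijection. -/

import Mathlib

def rhoVal {α : Type*} (ρ : α → ℤ) (l : List α) : ℤ := (l.map ρ).sum

def IsMinusPath {α : Type*} (ρ : α → ℤ) (l : List α) : Prop :=
  l = [] ∨ (rhoVal ρ l < 0 ∧ ∀ i < l.length, rhoVal ρ l < rhoVal ρ (l.take i))

def IsZeroPath {α : Type*} (ρ : α → ℤ) (l : List α) : Prop :=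
  rhoVal ρ l = 0 ∧ ∀ i : ℕ, 0 ≤ rhoVal ρ (l.take i)

def IsPlusPath {α : Type*} (ρ : α → ℤ) (l : List α) : Prop :=
  ∀ i : ℕ, 0 < i → i ≤ l.length → 0 < rhoVal ρ (l.take i)

/-- An element `p` of a submonoid `M` (of the free monoid on `α`, whose
elements are lists) is a *prime* of `M` if it is nontrivial and admits no
factorization into two nontrivial elements of `M`. -/
def IsPrimeIn {α : Type*} (M : Set (List α)) (p : List α) : Prop :=
  p ∈ M ∧ p ≠ [] ∧ ∀ a b : List α, a ∈ M → b ∈ M → a ++ b = p → a = [] ∨ b = []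

/-- A subset `M` of the free monoid on `α` is a *free submonoid* if it is a
submonoid and every element of `M` factors uniquely into primes of `M`. -/
def IsFreeSubmonoid {α : Type*} (M : Set (List α)) : Prop :=
  [] ∈ M ∧ (∀ a ∈ M, ∀ b ∈ M, a ++ b ∈ M) ∧
    ∀ x ∈ M, ∃! L : List (List α), (∀ q ∈ L, IsPrimeIn M q) ∧ L.flatten = x

namespace GesselAux

variable {α : Type*} (ρ : α → ℤ)

lemma rv_append (a b : List α) : rhoVal ρ (a ++ b) = rhoVal ρ a + rhoVal ρ b := by
  simp [rhoVal]

lemma rv_nil : rhoVal ρ ([] : List α) = 0 := rfl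

lemma rv_take_append (a b : List α) (i : ℕ) :
    rhoVal ρ ((a ++ b).take i) = rhoVal ρ (a.take i) + rhoVal ρ (b.take (i - a.length)) := by
  rw [List.take_append, rv_append]

lemma rv_drop (l : List α) (i : ℕ) :
    rhoVal ρ (l.drop i) = rhoVal ρ l - rhoVal ρ (l.take i) := by
  have := rv_append ρ (l.take i) (l.drop i)
  rw [List.take_append_drop] at this
  omega

section Free

variable {M : Set (List α)} (h0 : [] ∈ M)
  (hmul : ∀ a ∈ M, ∀ b ∈ M, a ++ b ∈ M)

include h0 hmul in
lemma flatten_mem : ∀ L : List (List α), (∀ q ∈ L, q ∈ M) → L.flatten ∈ M := by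
  intro L
  induction L with
  | nil => intro _; simpa using h0
  | cons q T ih =>
    intro h
    simpa using hmul q (h q (by simp)) _ (ih fun x hx => h x (by simp [hx]))

include h0 hmul in
lemma exists_factorization :
    ∀ n (x : List α), x.length ≤ n → x ∈ M →
      ∃ L : List (List α), (∀ q ∈ L, IsPrimeIn M q) ∧ L.flatten = x := by
  intro n
  induction n with
  | zero =>
    intro x hx _
    have : x = [] := List.length_eq_zero_iff.mp (Nat.le_zero.mp hx)
    exact ⟨[], by simp, by simp [this]⟩
  | succ n ih =>
    intro x hx hxM
    rcases eq_or_ne x [] with rfl | hne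
    · exact ⟨[], by simp, by simp⟩
    · classical
      have hPx : (0 < x.length ∧ x.take x.length ∈ M ∧ x.drop x.length ∈ M) := by
        refine ⟨List.length_pos_iff.mpr hne, ?_, ?_⟩
        · rw [List.take_length]; exact hxM
        · rw [List.drop_length]; exact h0
      set P : ℕ → Prop := fun i => 0 < i ∧ x.take i ∈ M ∧ x.drop i ∈ M with hP
      have hex : ∃ i, P i := ⟨x.length, hPx⟩
      set i₀ := Nat.find hex with hi₀
      obtain ⟨hi₀pos, htake, hdrop⟩ := Nat.find_spec hex
      have hi₀le : i₀ ≤ x.length := Nat.find_le hPx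
      -- x.take i₀ is prime
      have hprime : IsPrimeIn M (x.take i₀) := by
        refine ⟨htake, ?_, ?_⟩
        · intro h
          rcases List.take_eq_nil_iff.mp h with h' | h'
          · omega
          · exact hne h'
        · intro a b haM hbM hab
          by_contra hcon
          push_neg at hcon
          obtain ⟨ha, hb⟩ := hcon
          have hlen : a.length + b.length = i₀ := by
            have := congrArg List.length hab
            simp [List.length_take] at this
            omega
          have hblen : 0 < b.length := List.length_pos_iff.mpr hb
          have halen : 0 < a.length := List.length_pos_iff.mpr ha
          have hlt : a.length < i₀ := by omega
          have hPa : P a.length := by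
            refine ⟨halen, ?_, ?_⟩
            · have : x.take a.length = a := by
                have : (x.take i₀).take a.length = a := by
                  rw [← hab, List.take_append_of_le_length (by omega), List.take_length]
                rwa [List.take_take, min_eq_left (by omega)] at this
              rw [this]; exact haM
            · have hx2 : x.drop a.length = b ++ x.drop i₀ := by
                have h1 : x = a ++ b ++ x.drop i₀ := by
                  rw [hab, List.take_append_drop]
                conv_lhs => rw [h1]
                rw [List.append_assoc, List.drop_append_of_le_length (le_refl _),
                  List.drop_length, List.nil_append]
              rw [hx2]; exact hmul b hbM _ hdrop
          exact Nat.find_min hex hlt hPa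
      have hdroplen : (x.drop i₀).length ≤ n := by
        rw [List.length_drop]
        have : 0 < x.length := List.length_pos_iff.mpr hne
        omega
      obtain ⟨L', hL'p, hL'f⟩ := ih (x.drop i₀) hdroplen hdrop
      refine ⟨x.take i₀ :: L', ?_, by simp [hL'f]⟩
      intro q hq
      rcases List.mem_cons.mp hq with rfl | hq
      · exact hprime
      · exact hL'p q hq

include h0 hmul in
lemma fact_unique
    (hstab : ∀ p r s, p ∈ M → s ∈ M → p ++ r ∈ M → r ++ s ∈ M → r ∈ M) :
    ∀ L1 L2 : List (List α), (∀ q ∈ L1, IsPrimeIn M q) → (∀ q ∈ L2, IsPrimeIn M q) →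
      L1.flatten = L2.flatten → L1 = L2 := by
  intro L1
  induction L1 with
  | nil =>
    intro L2 _ hL2 h
    cases L2 with
    | nil => rfl
    | cons q T =>
      exfalso
      simp only [List.flatten_nil, List.flatten_cons] at h
      exact (hL2 q (by simp)).2.1 (List.append_eq_nil_iff.mp h.symm).1
  | cons p T1 ih =>
    intro L2 hL1 hL2 h
    cases L2 with
    | nil =>
      exfalso
      simp only [List.flatten_nil, List.flatten_cons] at h
      exact (hL1 p (by simp)).2.1 (List.append_eq_nil_iff.mp h).1
    | cons q T2 =>
      simp only [List.flatten_cons] at h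
      have hp := hL1 p (by simp)
      have hq := hL2 q (by simp)
      have hT1 : ∀ x ∈ T1, IsPrimeIn M x := fun x hx => hL1 x (by simp [hx])
      have hT2 : ∀ x ∈ T2, IsPrimeIn M x := fun x hx => hL2 x (by simp [hx])
      have hT1M : T1.flatten ∈ M := flatten_mem h0 hmul T1 fun x hx => (hT1 x hx).1
      have hT2M : T2.flatten ∈ M := flatten_mem h0 hmul T2 fun x hx => (hT2 x hx).1
      have hpq : p = q := by
        rcases List.append_eq_append_iff.mp h with ⟨r, hr1, hr2⟩ | ⟨r, hr1, hr2⟩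
        · -- q = p ++ r, T1.flatten = r ++ T2.flatten
          have hrM : r ∈ M := hstab p r T2.flatten hp.1 hT2M (hr1 ▸ hq.1) (hr2 ▸ hT1M)
          rcases hq.2.2 p r hp.1 hrM hr1.symm with h' | h'
          · exact absurd h' hp.2.1
          · rw [hr1, h', List.append_nil]
        · -- p = q ++ r, T2.flatten = r ++ T1.flatten
          have hrM : r ∈ M := hstab q r T1.flatten hq.1 hT1M (hr1 ▸ hp.1) (hr2 ▸ hT2M)
          rcases hp.2.2 q r hq.1 hrM hr1.symm with h' | h'
          · exact absurd h' hq.2.1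
          · rw [hr1, h', List.append_nil]
      subst hpq
      have : T1.flatten = T2.flatten := by
        have := List.append_cancel_left h
        exact this
      rw [ih T2 hT1 hT2 this]

include h0 hmul in
lemma isFree_of_stable
    (hstab : ∀ p r s, p ∈ M → s ∈ M → p ++ r ∈ M → r ++ s ∈ M → r ∈ M) :
    IsFreeSubmonoid M := by
  refine ⟨h0, hmul, fun x hx => ?_⟩
  obtain ⟨L, hL⟩ := exists_factorization h0 hmul x.length x le_rfl hx
  refine ⟨L, hL, fun L' hL' => ?_⟩
  exact fact_unique h0 hmul hstab L' L hL'.1 hL.1 (by rw [hL'.2, hL.2])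

end Free
end GesselAux
namespace GesselAux
variable {α : Type*} (ρ : α → ℤ)

-- helper facts
lemma minus_take_ge {a : List α} (ha : IsMinusPath ρ a) (j : ℕ) :
    rhoVal ρ a ≤ rhoVal ρ (a.take j) := by
  rcases ha with rfl | ⟨hneg, hpre⟩
  · simp
  · rcases lt_or_ge j a.length with h | h
    · exact (hpre j h).le
    · rw [List.take_of_length_le h]

lemma plus_take_nonneg {c : List α} (hc : IsPlusPath ρ c) (k : ℕ) :
    0 ≤ rhoVal ρ (c.take k) := by
  rcases Nat.eq_zero_or_pos k with rfl | hk
  · simp [rhoVal]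
  · rcases le_or_gt k c.length with h | h
    · exact (hc k hk h).le
    · rw [List.take_of_length_le h.le]
      rcases eq_or_ne c [] with rfl | hne
      · simp [rhoVal]
      · have := hc c.length (List.length_pos_iff.mpr hne) le_rfl
        rw [List.take_length] at this
        exact this.le
  
lemma plus_rv_nonneg {c : List α} (hc : IsPlusPath ρ c) : 0 ≤ rhoVal ρ c := by
  have := plus_take_nonneg ρ hc c.length
  rwa [List.take_length] at this

-- MINUS: closure
lemma minus_append {a b : List α} (ha : IsMinusPath ρ a) (hb : IsMinusPath ρ b) :
    IsMinusPath ρ (a ++ b) := by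
  rcases ha with rfl | ⟨haneg, hapre⟩
  · simpa using hb
  rcases hb with rfl | ⟨hbneg, hbpre⟩
  · rw [List.append_nil]; exact Or.inr ⟨haneg, hapre⟩
  right
  rw [rv_append]
  constructor
  · omega
  · intro i hi
    rw [rv_take_append]
    rcases le_or_gt i a.length with h | h
    · have h1 : rhoVal ρ a ≤ rhoVal ρ (a.take i) := minus_take_ge ρ (Or.inr ⟨haneg, hapre⟩) i
      have h2 : i - a.length = 0 := by omega
      rw [h2]
      simp only [List.take_zero]
      have : rhoVal ρ ([] : List α) = 0 := rfl
      omega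
    · rw [List.take_of_length_le h.le]
      have hlt : i - a.length < b.length := by
        simp [List.length_append] at hi
        omega
      have := hbpre (i - a.length) hlt
      omega

-- MINUS: stability (only needs p ++ r minus)
lemma minus_stable {p r : List α} (hpr : IsMinusPath ρ (p ++ r)) :
    IsMinusPath ρ r := by
  rcases eq_or_ne r [] with rfl | hne
  · left; rfl
  rcases hpr with h | ⟨hneg, hpre⟩
  · exact absurd (List.append_eq_nil_iff.mp h).2 hne
  right
  rw [rv_append] at hneg
  have hlen : (p ++ r).length = p.length + r.length := List.length_append
  have key : ∀ k < r.length, rhoVal ρ (p ++ r) < rhoVal ρ ((p ++ r).take (p.length + k)) := by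
    intro k hk
    exact hpre _ (by omega)
  constructor
  · have := key 0 (List.length_pos_iff.mpr hne)
    rw [rv_take_append] at this
    simp only [Nat.add_sub_cancel_left] at this
    rw [List.take_of_length_le (by omega), rv_append] at this
    simp only [List.take_zero] at this
    have h0 : rhoVal ρ ([] : List α) = 0 := rfl
    omega
  · intro k hk
    have := key k hk
    rw [rv_take_append, List.take_of_length_le (by omega), rv_append,
      Nat.add_sub_cancel_left] at this
    omega

-- ZERO: closure
lemma zero_append {a b : List α} (ha : IsZeroPath ρ a) (hb : IsZeroPath ρ b) :
    IsZeroPath ρ (a ++ b) := by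
  refine ⟨by rw [rv_append, ha.1, hb.1]; ring, fun i => ?_⟩
  rw [rv_take_append]
  have := ha.2 i
  have := hb.2 (i - a.length)
  omega

-- ZERO: stability
lemma zero_stable {p r : List α} (hp : IsZeroPath ρ p) (hpr : IsZeroPath ρ (p ++ r)) :
    IsZeroPath ρ r := by
  have hsum : rhoVal ρ r = 0 := by
    have := hpr.1; rw [rv_append, hp.1] at this; omega
  refine ⟨hsum, fun k => ?_⟩
  have := hpr.2 (p.length + k)
  rw [rv_take_append, List.take_of_length_le (by omega), Nat.add_sub_cancel_left,
    hp.1] at this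
  omega

-- PLUS: closure
lemma plus_append {a b : List α} (ha : IsPlusPath ρ a) (hb : IsPlusPath ρ b) :
    IsPlusPath ρ (a ++ b) := by
  intro i hi hile
  rw [rv_take_append]
  rcases le_or_gt i a.length with h | h
  · have h2 : i - a.length = 0 := by omega
    rw [h2]
    simp only [List.take_zero]
    have := ha i hi h
    have h0 : rhoVal ρ ([] : List α) = 0 := rfl
    omega
  · rw [List.take_of_length_le h.le]
    have h1 : 0 ≤ rhoVal ρ a := plus_rv_nonneg ρ ha
    have h2 : 0 < rhoVal ρ (b.take (i - a.length)) := by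
      apply hb (i - a.length) (by omega)
      rw [List.length_append] at hile
      omega
    omega

-- PLUS: stability (needs r ++ s plus)
lemma plus_stable {r s : List α} (hrs : IsPlusPath ρ (r ++ s)) :
    IsPlusPath ρ r := by
  intro k hk hkle
  have := hrs k hk (by rw [List.length_append]; omega)
  rwa [List.take_append_of_le_length hkle] at this

end GesselAux
namespace GesselAux
variable {α : Type*} (ρ : α → ℤ)

lemma lower_bound {a b c : List α} (ha : IsMinusPath ρ a) (hb : IsZeroPath ρ b)
    (hc : IsPlusPath ρ c) (j : ℕ) :
    rhoVal ρ a ≤ rhoVal ρ ((a ++ b ++ c).take j) := by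
  rw [List.append_assoc, rv_take_append, rv_take_append]
  have h1 := minus_take_ge ρ ha j
  have h2 := hb.2 (j - a.length)
  have h3 := plus_take_nonneg ρ hc (j - a.length - b.length)
  omega

lemma inj_a {a b c a' t : List α} (ha : IsMinusPath ρ a) (hb : IsZeroPath ρ b)
    (hc : IsPlusPath ρ c) (ha' : IsMinusPath ρ a')
    (heq : a ++ b ++ c = a' ++ t) (hlt : a.length < a'.length) : False := by
  rcases ha' with rfl | ⟨hneg', hpre'⟩
  · simp at hlt
  have h1 : rhoVal ρ a = rhoVal ρ (a'.take a.length) := by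
    have e1 : (a ++ b ++ c).take a.length = a := by
      rw [List.append_assoc, List.take_append_of_le_length le_rfl, List.take_length]
    have e2 : (a' ++ t).take a.length = a'.take a.length :=
      List.take_append_of_le_length hlt.le
    conv_lhs => rw [← e1]
    rw [heq, e2]
  have h2 : rhoVal ρ a' < rhoVal ρ (a'.take a.length) := hpre' _ hlt
  have h3 : rhoVal ρ a ≤ rhoVal ρ a' := by
    have := lower_bound ρ ha hb hc a'.length
    rwa [heq, List.take_append_of_le_length le_rfl, List.take_length] at this
  omega

lemma inj_b {b c b' t : List α} (hb : IsZeroPath ρ b) (hc : IsPlusPath ρ c)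
    (hb' : IsZeroPath ρ b') (heq : b ++ c = b' ++ t) (hlt : b.length < b'.length) :
    False := by
  have hle : b'.length ≤ b.length + c.length := by
    have := congrArg List.length heq
    simp only [List.length_append] at this
    omega
  have h1 : rhoVal ρ ((b ++ c).take b'.length) = 0 := by
    rw [heq, List.take_append_of_le_length le_rfl, List.take_length, hb'.1]
  rw [rv_take_append, List.take_of_length_le hlt.le, hb.1] at h1
  have h2 : 0 < rhoVal ρ (c.take (b'.length - b.length)) :=
    hc _ (by omega) (by omega)
  omega

lemma the_injective :
    Function.Injective
      (fun p : {l : List α // IsMinusPath ρ l} × {l : List α // IsZeroPath ρ l} ×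
          {l : List α // IsPlusPath ρ l} =>
        (p.1 : List α) ++ (p.2.1 : List α) ++ (p.2.2 : List α)) := by
  rintro ⟨⟨a, ha⟩, ⟨b, hb⟩, ⟨c, hc⟩⟩ ⟨⟨a', ha'⟩, ⟨b', hb'⟩, ⟨c', hc'⟩⟩ h
  simp only at h
  have hlenA : a.length = a'.length := by
    rcases lt_trichotomy a.length a'.length with h1 | h1 | h1
    · exact absurd (inj_a ρ ha hb hc ha' (by rw [h, List.append_assoc]) h1) not_false
    · exact h1
    · exact absurd (inj_a ρ ha' hb' hc' ha (by rw [← h, List.append_assoc]) h1) not_false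
  have h' : a ++ (b ++ c) = a' ++ (b' ++ c') := by
    rw [← List.append_assoc, ← List.append_assoc, h]
  obtain ⟨hA, hBC⟩ := List.append_inj h' hlenA
  have hlenB : b.length = b'.length := by
    rcases lt_trichotomy b.length b'.length with h1 | h1 | h1
    · exact absurd (inj_b ρ hb hc hb' hBC h1) not_false
    · exact h1
    · exact absurd (inj_b ρ hb' hc' hb hBC.symm h1) not_false
  obtain ⟨hB, hC⟩ := List.append_inj hBC hlenB
  simp only [Prod.ext_iff, Subtype.ext_iff]
  exact ⟨hA, hB, hC⟩

lemma the_surjective :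
    Function.Surjective
      (fun p : {l : List α // IsMinusPath ρ l} × {l : List α // IsZeroPath ρ l} ×
          {l : List α // IsPlusPath ρ l} =>
        (p.1 : List α) ++ (p.2.1 : List α) ++ (p.2.2 : List α)) := by
  classical
  intro l
  set n := l.length with hn
  set pv : ℕ → ℤ := fun i => rhoVal ρ (l.take i) with hpv
  obtain ⟨iw, hiwmem, hiwmin⟩ :=
    Finset.exists_min_image (Finset.range (n + 1)) pv ⟨0, by simp⟩
  set m := pv iw with hm
  have hmin : ∀ j ≤ n, m ≤ pv j := fun j hj =>
    hiwmin j (Finset.mem_range.mpr (by omega))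
  have hex1 : ∃ i, pv i = m := ⟨iw, rfl⟩
  set i₁ := Nat.find hex1 with hi₁def
  have hi₁ : pv i₁ = m := Nat.find_spec hex1
  have hi₁le : i₁ ≤ n := by
    have h1 : i₁ ≤ iw := Nat.find_le rfl
    have h2 : iw ≤ n := by
      have := Finset.mem_range.mp hiwmem; omega
    omega
  have hi₁min : ∀ j < i₁, pv j ≠ m := fun j hj => Nat.find_min hex1 hj
  set i₂ := Nat.findGreatest (fun i => pv i = m) n with hi₂def
  have hi₂ : pv i₂ = m := Nat.findGreatest_spec (P := fun i => pv i = m) hi₁le hi₁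
  have hi₁₂ : i₁ ≤ i₂ := Nat.le_findGreatest (P := fun i => pv i = m) hi₁le hi₁
  have hi₂le : i₂ ≤ n := Nat.findGreatest_le (P := fun i => pv i = m) n
  have hi₂max : ∀ j, i₂ < j → j ≤ n → pv j ≠ m := fun j hj hjn =>
    Nat.findGreatest_is_greatest (P := fun i => pv i = m) hj hjn
  -- the three pieces
  set a := l.take i₁ with hadef
  set b := (l.take i₂).drop i₁ with hbdef
  set c := l.drop i₂ with hcdef
  have hrva : rhoVal ρ a = m := hi₁
  have hpv0 : pv 0 = 0 := by simp [hpv, rhoVal]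
  have hlena : a.length = i₁ := by
    rw [hadef, List.length_take]; omega
  have ha : IsMinusPath ρ a := by
    rcases Nat.eq_zero_or_pos i₁ with h0 | hpos
    · left; rw [hadef, h0, List.take_zero]
    · right
      have hmneg : m < 0 := by
        have h1 : m ≤ 0 := hpv0 ▸ hmin 0 (by omega)
        rcases lt_or_eq_of_le h1 with h | h
        · exact h
        · exfalso
          have h0' : pv 0 = m := by rw [hpv0, h]
          have hfind : i₁ ≤ 0 := Nat.find_min' hex1 h0'
          omega
      refine ⟨hrva ▸ hmneg, fun j hj => ?_⟩
      rw [hlena] at hj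
      have e : a.take j = l.take j := by
        rw [hadef, List.take_take, min_eq_left hj.le]
      rw [hrva, e]
      have h1 : m ≤ pv j := hmin j (by omega)
      have h2 : pv j ≠ m := hi₁min j hj
      have : pv j = rhoVal ρ (l.take j) := rfl
      omega
  have hb : IsZeroPath ρ b := by
    have e1 : (l.take i₂).take i₁ = l.take i₁ := by
      rw [List.take_take, min_eq_left hi₁₂]
    constructor
    · rw [hbdef, rv_drop, e1]
      have : rhoVal ρ (l.take i₂) = m := hi₂
      have : rhoVal ρ (l.take i₁) = m := hi₁
      omega
    · intro k
      have e2 : b.take k = ((l.take i₂).take (i₁ + k)).drop i₁ := by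
        rw [hbdef, List.take_drop]
      have e3 : (l.take i₂).take (i₁ + k) = l.take (min (i₁ + k) i₂) := by
        rw [List.take_take]
      have e4 : (l.take (min (i₁ + k) i₂)).take i₁ = l.take i₁ := by
        rw [List.take_take, min_eq_left (by omega)]
      rw [e2, rv_drop, e3, e4]
      have h1 : m ≤ pv (min (i₁ + k) i₂) := hmin _ (by omega)
      have h2 : pv (min (i₁ + k) i₂) = rhoVal ρ (l.take (min (i₁ + k) i₂)) := rfl
      have h3 : rhoVal ρ (l.take i₁) = m := hi₁
      omega
  have hc : IsPlusPath ρ c := by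
    intro k hk hkle
    rw [hcdef, List.length_drop] at hkle
    have e1 : c.take k = (l.take (i₂ + k)).drop i₂ := by
      rw [hcdef, List.take_drop]
    have e2 : (l.take (i₂ + k)).take i₂ = l.take i₂ := by
      rw [List.take_take, min_eq_left (by omega)]
    rw [e1, rv_drop, e2]
    have h1 : m ≤ pv (i₂ + k) := hmin _ (by omega)
    have h2 : pv (i₂ + k) ≠ m := hi₂max _ (by omega) (by omega)
    have h3 : pv (i₂ + k) = rhoVal ρ (l.take (i₂ + k)) := rfl
    have h4 : rhoVal ρ (l.take i₂) = m := hi₂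
    omega
  refine ⟨⟨⟨a, ha⟩, ⟨b, hb⟩, ⟨c, hc⟩⟩, ?_⟩
  show a ++ b ++ c = l
  have e1 : a ++ b = l.take i₂ := by
    rw [hadef, hbdef]
    conv_lhs => rw [show l.take i₁ = (l.take i₂).take i₁ by
      rw [List.take_take, min_eq_left hi₁₂]]
    exact List.take_append_drop _ _
  rw [e1, hcdef, List.take_append_drop]

end GesselAux



/-- **Proposition 3.2.** For a Gessel pair `(H, ρ)` (with `H` the free monoid
on the set `α` of its primes and `ρ` the homomorphism induced by `ρ : α → ℤ`),
the sets `H₋`, `H₀`, `H₊` of minus-, zero-, and plus-paths are free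
submonoids, and the map `H₋ × H₀ × H₊ → H`, `(π₋, π₀, π₊) ↦ π₋ π₀ π₊`
(whose inverse is `π ↦ (π₋, π₀, π₊)`) is a bijection. -/
theorem gessel_pair_free_submonoids_and_bijection {α : Type*} (ρ : α → ℤ) :
    IsFreeSubmonoid {l : List α | IsMinusPath ρ l} ∧
    IsFreeSubmonoid {l : List α | IsZeroPath ρ l} ∧
    IsFreeSubmonoid {l : List α | IsPlusPath ρ l} ∧
    Function.Bijective
      (fun p : {l : List α // IsMinusPath ρ l} × {l : List α // IsZeroPath ρ l} ×
          {l : List α // IsPlusPath ρ l} =>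
        (p.1 : List α) ++ (p.2.1 : List α) ++ (p.2.2 : List α)) := by
  refine ⟨?_, ?_, ?_, GesselAux.the_injective ρ, GesselAux.the_surjective ρ⟩
  · exact GesselAux.isFree_of_stable (Or.inl rfl)
      (fun a ha b hb => GesselAux.minus_append ρ ha hb)
      (fun p r s _ _ hpr _ => GesselAux.minus_stable ρ hpr)
  · exact GesselAux.isFree_of_stable ⟨rfl, fun i => by simp [rhoVal]⟩
      (fun a ha b hb => GesselAux.zero_append ρ ha hb)
      (fun p r s hp _ hpr _ => GesselAux.zero_stable ρ hp hpr)
  · exact GesselAux.isFree_of_stable (fun i hi hile => by simp at hile; omega)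
      (fun a ha b hb => GesselAux.plus_append ρ ha hb)
      (fun p r s _ _ _ hrs => GesselAux.plus_stable ρ hrs)
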